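/- Let V : ℕ → ℝ≥0, η ∈ [0,1), ρ ∈ [η,1), and w : ℕ → ℝ≥0. Suppose there exists M ≥ 1 such that for every t ≥ M and every window length m with M ≤ m ≤ t one has V(t) ≤ ρ^m · V(t−m) + Σ_{j=t−m}^{t−1} η^{t−j−1} w(j), and moreover for every l with 0 ≤ l < M one has V(l) ≤ 4 η^l V(0) + Σ_{j=0}^{l−1} η^{l−j−1} w(j). If time t can be partitioned backwards into intervals each of length at least M (each interval of length m_i with M ≤ m_i), then V(t) ≤ 4 ρ^t V(0) + Σ_{q=0}^{t−1} ρ^{t−q−1} w(q). -/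

import Mathlib

/-- Interval-concatenation argument (proof of Theorem 1).  Let `V : ℕ → ℝ≥0`,
`η ∈ [0,1)`, `ρ ∈ [η,1)`, `w : ℕ → ℝ≥0`, and suppose there is `M ≥ 1` such that
for every `t ≥ M` and window length `m` with `M ≤ m ≤ t`,
`V(t) ≤ ρ^m·V(t−m) + Σ_{j=t−m}^{t−1} η^{t−j−1} w(j)`, and for every `l < M`,
`V(l) ≤ 4η^l V(0) + Σ_{j=0}^{l−1} η^{l−j−1} w(j)`.  If time `t` can be partitioned
backwards into intervals each of length at least `M` (witnessed by the decreasing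
sequence `s` with `s 0 = t`, `s k < M` and `s (i+1) + M ≤ s i` for `i < k`), then
`V(t) ≤ 4ρ^t V(0) + Σ_{q=0}^{t−1} ρ^{t−q−1} w(q)`. -/
theorem stmt_6 (V w : ℕ → ℝ) (η ρ : ℝ)
    (hη0 : 0 ≤ η) (hη1 : η < 1) (hηρ : η ≤ ρ) (hρ1 : ρ < 1)
    (hV : ∀ s, 0 ≤ V s) (hw : ∀ j, 0 ≤ w j)
    (M : ℕ) (hM : 1 ≤ M)
    (hstep : ∀ t m, M ≤ t → M ≤ m → m ≤ t →
      V t ≤ ρ ^ m * V (t - m) + ∑ j ∈ Finset.Ico (t - m) t, η ^ (t - j - 1) * w j)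
    (hinit : ∀ l, l < M →
      V l ≤ 4 * η ^ l * V 0 + ∑ j ∈ Finset.Ico 0 l, η ^ (l - j - 1) * w j)
    (t k : ℕ) (s : ℕ → ℕ) (hs0 : s 0 = t) (hsk : s k < M)
    (hdec : ∀ i, i < k → s (i + 1) + M ≤ s i) :
    V t ≤ 4 * ρ ^ t * V 0 + ∑ q ∈ Finset.range t, ρ ^ (t - q - 1) * w q := by
  have hρ0 : 0 ≤ ρ := le_trans hη0 hηρ
  have hpow : ∀ n : ℕ, η ^ n ≤ ρ ^ n := fun n => pow_le_pow_left₀ hη0 hηρ n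
  induction k generalizing t s with
  | zero =>
    have ht : t < M := hs0 ▸ hsk
    calc V t ≤ 4 * η ^ t * V 0 + ∑ j ∈ Finset.Ico 0 t, η ^ (t - j - 1) * w j :=
          hinit t ht
      _ ≤ 4 * ρ ^ t * V 0 + ∑ j ∈ Finset.range t, ρ ^ (t - j - 1) * w j := by
          rw [Finset.range_eq_Ico]
          apply add_le_add
          · exact mul_le_mul_of_nonneg_right
              (mul_le_mul_of_nonneg_left (hpow t) (by norm_num)) (hV 0)
          · exact Finset.sum_le_sum fun j _ =>
              mul_le_mul_of_nonneg_right (hpow _) (hw j)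
  | succ k ih =>
    have hIH := ih (s 1) (fun i => s (i + 1)) rfl hsk
      (fun i hi => hdec (i + 1) (Nat.succ_lt_succ hi))
    have h1 : s 1 + M ≤ t := hs0 ▸ hdec 0 (Nat.succ_pos k)
    set t' := s 1 with ht'
    have hMt : M ≤ t := by omega
    have hm : M ≤ t - t' := by omega
    have hsub : t - (t - t') = t' := by omega
    have hstep' := hstep t (t - t') hMt hm (Nat.sub_le t t')
    rw [hsub] at hstep'
    have key : ρ ^ (t - t') * V t'
        ≤ 4 * ρ ^ t * V 0 + ∑ q ∈ Finset.range t', ρ ^ (t - q - 1) * w q := by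
      calc ρ ^ (t - t') * V t'
          ≤ ρ ^ (t - t') * (4 * ρ ^ t' * V 0
              + ∑ q ∈ Finset.range t', ρ ^ (t' - q - 1) * w q) :=
            mul_le_mul_of_nonneg_left hIH (pow_nonneg hρ0 _)
        _ = 4 * ρ ^ t * V 0 + ∑ q ∈ Finset.range t', ρ ^ (t - q - 1) * w q := by
            rw [mul_add, Finset.mul_sum]
            congr 1
            · rw [show ρ ^ (t - t') * (4 * ρ ^ t' * V 0)
                  = 4 * (ρ ^ (t - t') * ρ ^ t') * V 0 by ring, ← pow_add,
                show t - t' + t' = t by omega]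
            · refine Finset.sum_congr rfl fun q hq => ?_
              have hq' : q < t' := Finset.mem_range.mp hq
              rw [show ρ ^ (t - t') * (ρ ^ (t' - q - 1) * w q)
                  = ρ ^ (t - t') * ρ ^ (t' - q - 1) * w q by ring, ← pow_add,
                show t - t' + (t' - q - 1) = t - q - 1 by omega]
    calc V t ≤ ρ ^ (t - t') * V t' + ∑ j ∈ Finset.Ico t' t, η ^ (t - j - 1) * w j :=
          hstep'
      _ ≤ (4 * ρ ^ t * V 0 + ∑ q ∈ Finset.range t', ρ ^ (t - q - 1) * w q)
          + ∑ j ∈ Finset.Ico t' t, ρ ^ (t - j - 1) * w j :=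
          add_le_add key (Finset.sum_le_sum fun j _ =>
            mul_le_mul_of_nonneg_right (hpow _) (hw j))
      _ = 4 * ρ ^ t * V 0 + ∑ q ∈ Finset.range t, ρ ^ (t - q - 1) * w q := by
          rw [add_assoc, Finset.range_eq_Ico,
            Finset.sum_Ico_consecutive _ (Nat.zero_le t') (by omega : t' ≤ t), ← Finset.range_eq_Ico]
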